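/- arXiv:1705.08791 — 7 statements merged into one kernel-verified Lean document; each statement's English description precedes it below -/
import Mathlib

section
/- Let S(t) = Σ_{i≥0} s_i t^i be a complex polynomial of degree at most n. Then the polynomial f_S^i(t) is divisible by t for all i ≥ n+2. -/
open Polynomial in
/-- The sequence of polynomials `f_S^i` associated to a coefficient sequence `s`. -/
noncomputable def fseq {R : Type*} [CommRing R] [Algebra ℚ R] (s : ℕ → R) : ℕ → Polynomial R
  | 0 => 0
  | 1 => C (s 0)
  | (k+2) =>
      ((((k : ℚ)+2)^2)⁻¹) •
        (C (s (k+1)) + X *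
          ∑ i ∈ (Finset.range (k+1)).attach,
            (C (s i.1) - ((((i.1 : ℤ))+1) * (2*(i.1 : ℤ)+1-((k : ℤ)+1))) • fseq s (i.1+1) ) *
              fseq s (k+1-i.1))
  termination_by k => k
  decreasing_by
  all_goals (first
    | omega
    | (have h := i.2; rw [Finset.mem_range] at h; omega))

/-- If `S(t) = Σ s_i t^i` is a complex polynomial of degree at most `n`,
then `f_S^i(t)` is divisible by `t` for all `i ≥ n + 2`. -/
theorem stmt2 (S : Polynomial ℂ) (n : ℕ) (hS : S.degree ≤ n) :
    ∀ i : ℕ, n + 2 ≤ i → Polynomial.X ∣ fseq (fun j => S.coeff j) i := by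
  intro i hi
  obtain ⟨k, rfl⟩ : ∃ k, i = k + 2 := ⟨i - 2, by omega⟩
  have hc : S.coeff (k + 1) = 0 := by
    apply Polynomial.coeff_eq_zero_of_degree_lt
    refine lt_of_le_of_lt hS ?_
    exact_mod_cast (by omega : n < k + 1)
  rw [fseq]
  simp only [hc, map_zero, zero_add]
  rw [Algebra.smul_def]
  exact Dvd.dvd.mul_left (dvd_mul_right _ _) _
end

section
/- Let S(t) ∈ ℂ[[t]] and suppose Q(t) ∈ ℂ[[t]] solves the ODE (t·Q''(t) + Q'(t))·Q(t) − t·(Q'(t))² = S(t)·Q(t), and suppose Q(t) is divisible by t^m but not by t^{m+1}. Write Q(t) = t^m·Q₁(t) with Q₁ ∈ ℂ[[t]]. Then Q₁(0) ≠ 0, S(t) is divisible by t^m, and writing S(t) = t^m·S₁(t), the power series Q₁(t) solves the same ODE with data S₁(t), i.e. (t·Q₁''(t) + Q₁'(t))·Q₁(t) − t·(Q₁'(t))² = S₁(t)·Q₁(t). -/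
open PowerSeries

def SolvesODE (S Q : PowerSeries ℂ) : Prop :=
  (X * (d⁄dX ℂ) ((d⁄dX ℂ) Q) + (d⁄dX ℂ) Q) * Q - X * ((d⁄dX ℂ) Q) ^ 2 = S * Q

private noncomputable def Lop (Q : PowerSeries ℂ) : PowerSeries ℂ :=
  (X * (d⁄dX ℂ) ((d⁄dX ℂ) Q) + (d⁄dX ℂ) Q) * Q - X * ((d⁄dX ℂ) Q) ^ 2

private lemma dX_mul (R : PowerSeries ℂ) : (d⁄dX ℂ) (X * R) = R + X * (d⁄dX ℂ) R := by
  rw [Derivation.leibniz, smul_eq_mul, smul_eq_mul, derivative_X, mul_one, add_comm]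

private lemma Lop_X_mul (R : PowerSeries ℂ) : Lop (X * R) = X ^ 2 * Lop R := by
  have h1 := dX_mul R
  have h2 : (d⁄dX ℂ) ((d⁄dX ℂ) (X * R)) =
      2 * (d⁄dX ℂ) R + X * (d⁄dX ℂ) ((d⁄dX ℂ) R) := by
    rw [h1, map_add, dX_mul]; ring
  rw [Lop, Lop, h2, h1]; ring

private lemma Lop_X_pow_mul (m : ℕ) (R : PowerSeries ℂ) :
    Lop (X ^ m * R) = X ^ (2 * m) * Lop R := by
  induction m with
  | zero => simp
  | succ n ih =>
      have : (X : PowerSeries ℂ) ^ (n + 1) * R = X * (X ^ n * R) := by ring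
      rw [this, Lop_X_mul, ih]; ring

/-- If `Q` solves the ODE for data `S`, `Q` is divisible by `t^m`
but not by `t^{m+1}`, and `Q = t^m·Q₁`, then `Q₁(0) ≠ 0`, `S` is divisible by `t^m`,
and for any `S₁` with `S = t^m·S₁`, the series `Q₁` solves the ODE with data `S₁`. -/
theorem stmt3 (S Q Q₁ : PowerSeries ℂ) (m : ℕ)
    (hode : SolvesODE S Q)
    (hdvd : (X : PowerSeries ℂ) ^ m ∣ Q)
    (hndvd : ¬ (X : PowerSeries ℂ) ^ (m + 1) ∣ Q)
    (hQ : Q = (X : PowerSeries ℂ) ^ m * Q₁) :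
    constantCoeff Q₁ ≠ 0 ∧ (X : PowerSeries ℂ) ^ m ∣ S ∧
      ∀ S₁ : PowerSeries ℂ, S = (X : PowerSeries ℂ) ^ m * S₁ → SolvesODE S₁ Q₁ := by
  have hc : constantCoeff Q₁ ≠ 0 := by
    intro h0
    apply hndvd
    obtain ⟨R, hR⟩ := X_dvd_iff.mpr h0
    exact ⟨R, by rw [hQ, hR, pow_succ]; ring⟩
  have hXm : (X : PowerSeries ℂ) ^ m ≠ 0 := pow_ne_zero _ X_ne_zero
  -- key identity
  have hkey : (X : PowerSeries ℂ) ^ m * Lop Q₁ = S * Q₁ := by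
    have h : Lop Q = S * Q := hode
    rw [hQ, Lop_X_pow_mul] at h
    have h2m : (X : PowerSeries ℂ) ^ (2 * m) = X ^ m * X ^ m := by rw [two_mul, pow_add]
    rw [h2m] at h
    have : (X : PowerSeries ℂ) ^ m * ((X : PowerSeries ℂ) ^ m * Lop Q₁) =
        (X : PowerSeries ℂ) ^ m * (S * Q₁) := by linear_combination h
    exact mul_left_cancel₀ hXm this
  have hu : IsUnit Q₁ := isUnit_iff_constantCoeff.mpr (Ne.isUnit hc)
  refine ⟨hc, ?_, ?_⟩
  · obtain ⟨V, hV⟩ := hu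
    refine ⟨Lop Q₁ * (↑V⁻¹ : PowerSeries ℂ), ?_⟩
    have h1 : S = S * Q₁ * (↑V⁻¹ : PowerSeries ℂ) := by
      rw [mul_assoc, ← hV, ← Units.val_mul, mul_inv_cancel, Units.val_one, mul_one]
    rw [h1, ← hkey]; ring
  · intro S₁ hS₁
    have : (X : PowerSeries ℂ) ^ m * Lop Q₁ = (X : PowerSeries ℂ) ^ m * (S₁ * Q₁) := by
      rw [hkey, hS₁]; ring
    exact mul_left_cancel₀ hXm this
end

section
/- Let S(t) be a complex polynomial of degree m. If a polynomial Q(t) of degree n solves the ODE (t·Q''(t) + Q'(t))·Q(t) − t·(Q'(t))² = S(t)·Q(t), then n ≥ m+2. -/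
open Polynomial

/-- A polynomial `Q` solves the ODE
`(t·Q''(t) + Q'(t))·Q(t) − t·(Q'(t))² = S(t)·Q(t)` for the data `S`. -/
def SolvesODEPoly (S Q : Polynomial ℂ) : Prop :=
  (X * derivative (derivative Q) + derivative Q) * Q - X * (derivative Q) ^ 2 = S * Q

lemma aux_coeff_zero (Q : Polynomial ℂ) (k : ℕ) (hk : Q.natDegree = k + 1) :
    ∀ i, 2 * k + 1 ≤ i →
      ((X * derivative (derivative Q) + derivative Q) * Q
        - X * (derivative Q) ^ 2).coeff i = 0 := by
  intro i hi
  have hQ' : (derivative Q).natDegree ≤ k := by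
    have := natDegree_derivative_le Q; omega
  have hQ''cases : derivative (derivative Q) = 0 ∨
      (derivative (derivative Q)).natDegree + 2 ≤ k + 1 := by
    by_cases h : derivative (derivative Q) = 0
    · left; exact h
    · right
      have h2 : (derivative Q).natDegree ≠ 0 := by
        intro h0
        obtain ⟨c, hc⟩ := natDegree_eq_zero.mp h0
        rw [← hc] at h; simp at h
      have h3 := natDegree_derivative_lt h2
      have h4 := natDegree_derivative_lt (p := Q) (by omega)
      omega
  have hE : (X * derivative (derivative Q) + derivative Q) * Q
        - X * (derivative Q) ^ 2
      = X * (derivative (derivative Q) * Q) + derivative Q * Q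
        - X * (derivative Q) ^ 2 := by ring
  rw [hE, coeff_sub, coeff_add]
  rcases eq_or_lt_of_le hi with heq | hlt
  · -- i = 2k+1 : the top coefficients cancel
    subst heq
    rcases Nat.eq_zero_or_eq_succ_pred k with hk0 | hkpos
    · -- k = 0, index 1
      subst hk0
      have hQ'' : derivative (derivative Q) = 0 := by
        rcases hQ''cases with h | h
        · exact h
        · omega
      have h1 : (X * (derivative (derivative Q) * Q)).coeff (2 * 0 + 1) = 0 := by
        rw [hQ'']; simp
      have h2 : (derivative Q * Q).coeff (2 * 0 + 1)
          = (derivative Q).coeff 0 * Q.coeff 1 := by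
        have := coeff_mul_add_eq_of_natDegree_le (f := derivative Q) (g := Q)
          (df := 0) (dg := 1) hQ' (by omega)
        simpa using this
      have h3 : (X * (derivative Q) ^ 2).coeff (2 * 0 + 1)
          = (derivative Q).coeff 0 * (derivative Q).coeff 0 := by
        rw [show 2 * 0 + 1 = 0 + 1 from rfl, coeff_X_mul, pow_two, mul_coeff_zero]
      have h4 : (derivative Q).coeff 0 = Q.coeff 1 := by
        have := coeff_derivative Q 0
        norm_num at this
        exact this
      rw [h1, h2, h3, h4]
      ring
    · -- k = j+1
      obtain ⟨j, rfl⟩ : ∃ j, k = j + 1 := ⟨k - 1, hkpos⟩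
      have hQ'' : (derivative (derivative Q)).natDegree ≤ j := by
        rcases hQ''cases with h | h
        · rw [h]; simp
        · omega
      have h1 : (X * (derivative (derivative Q) * Q)).coeff (2 * (j + 1) + 1)
          = (derivative (derivative Q)).coeff j * Q.coeff (j + 2) := by
        rw [show 2 * (j + 1) + 1 = (2 * j + 2) + 1 by omega, coeff_X_mul]
        have := coeff_mul_add_eq_of_natDegree_le (f := derivative (derivative Q)) (g := Q)
          (df := j) (dg := j + 2) hQ'' (by omega)
        rw [show j + (j + 2) = 2 * j + 2 by omega] at this
        exact this
      have h2 : (derivative Q * Q).coeff (2 * (j + 1) + 1)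
          = (derivative Q).coeff (j + 1) * Q.coeff (j + 2) := by
        have := coeff_mul_add_eq_of_natDegree_le (f := derivative Q) (g := Q)
          (df := j + 1) (dg := j + 2) (by omega) (by omega)
        rw [show (j + 1) + (j + 2) = 2 * (j + 1) + 1 by omega] at this
        exact this
      have h3 : (X * (derivative Q) ^ 2).coeff (2 * (j + 1) + 1)
          = (derivative Q).coeff (j + 1) * (derivative Q).coeff (j + 1) := by
        rw [show 2 * (j + 1) + 1 = (2 * j + 2) + 1 by omega, coeff_X_mul, pow_two]
        have := coeff_mul_add_eq_of_natDegree_le (f := derivative Q) (g := derivative Q)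
          (df := j + 1) (dg := j + 1) (by omega) (by omega)
        rw [show (j + 1) + (j + 1) = 2 * j + 2 by omega] at this
        exact this
      have h4 : (derivative Q).coeff (j + 1) = Q.coeff (j + 2) * ((j + 1 : ℕ) + 1 : ℕ) := by
        have := coeff_derivative Q (j + 1)
        push_cast at this ⊢
        exact this
      have h5 : (derivative (derivative Q)).coeff j
          = (derivative Q).coeff (j + 1) * ((j : ℕ) + 1 : ℕ) := by
        have := coeff_derivative (derivative Q) j
        push_cast at this ⊢
        exact this
      rw [h1, h2, h3, h5, h4]
      push_cast
      ring
  · -- i > 2k+1 : all terms are below degree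
    have h1 : (X * (derivative (derivative Q) * Q)).coeff i = 0 := by
      rcases hQ''cases with h | h
      · rw [h]; simp
      · apply coeff_eq_zero_of_natDegree_lt
        calc (X * (derivative (derivative Q) * Q)).natDegree
            ≤ X.natDegree + (derivative (derivative Q) * Q).natDegree := natDegree_mul_le
          _ ≤ X.natDegree + ((derivative (derivative Q)).natDegree + Q.natDegree) := by
              exact Nat.add_le_add_left natDegree_mul_le _
          _ < i := by
              have := natDegree_X_le (R := ℂ); omega
    have h2 : (derivative Q * Q).coeff i = 0 := by
      apply coeff_eq_zero_of_natDegree_lt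
      calc (derivative Q * Q).natDegree
          ≤ (derivative Q).natDegree + Q.natDegree := natDegree_mul_le
        _ < i := by omega
    have h3 : (X * (derivative Q) ^ 2).coeff i = 0 := by
      apply coeff_eq_zero_of_natDegree_lt
      calc (X * (derivative Q) ^ 2).natDegree
          ≤ X.natDegree + ((derivative Q) ^ 2).natDegree := natDegree_mul_le
        _ ≤ X.natDegree + 2 * (derivative Q).natDegree := by
            have := natDegree_pow_le (p := derivative Q) (n := 2); omega
        _ < i := by
            have := natDegree_X_le (R := ℂ); omega
    rw [h1, h2, h3]
    ring

/-- If `S` is a complex polynomial of degree `m` and a polynomial `Q`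
of degree `n` solves the ODE for data `S`, then `n ≥ m + 2`. -/
theorem stmt5 (S Q : Polynomial ℂ) (m n : ℕ) (hS : S.degree = m) (hQ : Q.degree = n)
    (hode : SolvesODEPoly S Q) : m + 2 ≤ n := by
  have hQ0 : Q ≠ 0 := fun h => by simp [h] at hQ
  have hS0 : S ≠ 0 := fun h => by simp [h] at hS
  have hm : S.natDegree = m := natDegree_eq_of_degree_eq_some hS
  have hn : Q.natDegree = n := natDegree_eq_of_degree_eq_some hQ
  unfold SolvesODEPoly at hode
  by_contra hcon
  push_neg at hcon
  have key : ((X * derivative (derivative Q) + derivative Q) * Q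
      - X * (derivative Q) ^ 2).coeff (m + n) = 0 := by
    rcases Nat.eq_zero_or_eq_succ_pred n with hn0 | hnpos
    · subst hn0
      obtain ⟨c, hc⟩ := natDegree_eq_zero.mp hn
      rw [← hc]
      simp
    · obtain ⟨k, rfl⟩ : ∃ k, n = k + 1 := ⟨n - 1, hnpos⟩
      exact aux_coeff_zero Q k hn (m + (k + 1)) (by omega)
  have hrhs : (S * Q).coeff (m + n) = S.leadingCoeff * Q.leadingCoeff := by
    rw [← hm, ← hn]; exact coeff_mul_degree_add_degree S Q
  have hzero : S.leadingCoeff * Q.leadingCoeff = 0 := by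
    rw [← hrhs, ← hode]; exact key
  exact mul_ne_zero (leadingCoeff_ne_zero.mpr hS0) (leadingCoeff_ne_zero.mpr hQ0) hzero
end

section
/- Let S(t) be a complex polynomial of degree m and suppose Q(t) is a polynomial solution of degree n of the ODE (t·Q'' + Q')·Q − t·(Q')² = S·Q. Then the reversed polynomial Q̃(t) = t^n·Q(1/t) solves the same ODE with data t^{n−m−2}·S̃(t), where S̃(t) = t^m·S(1/t). -/
open Polynomial

private lemma coeff_aux (p : Polynomial ℂ) (N : ℕ) (h : ∀ i, N < i → p.coeff i = 0)
    {i : ℕ} (hi : N ≤ i) : (N • p - X * derivative p).coeff i = 0 := by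
  rcases i with _ | j
  · have hN : N = 0 := Nat.le_zero.mp hi
    subst hN
    simp [mul_coeff_zero]
  · rw [coeff_sub, coeff_smul, coeff_X_mul, coeff_derivative]
    rcases eq_or_lt_of_le hi with h1 | h1
    · subst h1
      simp only [nsmul_eq_mul, smul_eq_mul]
      push_cast
      ring
    · rw [h _ h1]
      simp

private lemma X_mul_reflect (p : Polynomial ℂ) (N : ℕ) (hp : p.natDegree ≤ N) :
    X * reflect N p = reflect (N + 1) p := by
  ext k
  rcases k with _ | j
  · have h0 : (reflect (N + 1) p).coeff 0 = 0 := by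
      rw [coeff_reflect, revAt_le (Nat.zero_le _), Nat.sub_zero,
        coeff_eq_zero_of_natDegree_lt (show p.natDegree < N + 1 from by omega)]
    rw [mul_coeff_zero, coeff_X, h0]
    simp
  · rw [coeff_X_mul, coeff_reflect, coeff_reflect]
    rcases le_or_gt (j + 1) (N + 1) with h | h
    · rw [revAt_le h, revAt_le (by omega : j ≤ N)]
      congr 1
      omega
    · rw [revAt_eq_self_of_lt h, revAt_eq_self_of_lt (by omega : N < j),
        coeff_eq_zero_of_natDegree_lt (show p.natDegree < j from by omega),
        coeff_eq_zero_of_natDegree_lt (show p.natDegree < j + 1 from by omega)]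

private lemma derivative_reflect (p : Polynomial ℂ) (N : ℕ) (hp : p.natDegree ≤ N + 1) :
    derivative (reflect (N + 1) p) = reflect N ((N + 1) • p - X * derivative p) := by
  ext k
  rw [coeff_derivative, coeff_reflect, coeff_reflect]
  rcases le_or_gt k N with h | h
  · rw [revAt_le (by omega : k + 1 ≤ N + 1), revAt_le h,
      show N + 1 - (k + 1) = N - k from by omega]
    rcases e : N - k with _ | l
    · have hNk : N = k := by omega
      subst hNk
      rw [coeff_sub, coeff_smul, mul_coeff_zero, coeff_X]
      simp only [nsmul_eq_mul, smul_eq_mul]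
      push_cast
      ring
    · rw [coeff_sub, coeff_smul, coeff_X_mul, coeff_derivative]
      have hN : N = k + l + 1 := by omega
      subst hN
      simp only [nsmul_eq_mul, smul_eq_mul]
      push_cast
      ring
  · rw [revAt_eq_self_of_lt h, revAt_eq_self_of_lt (by omega : N + 1 < k + 1),
      coeff_eq_zero_of_natDegree_lt (show p.natDegree < k + 1 from by omega), zero_mul]
    rcases k with _ | j
    · omega
    · rw [coeff_sub, coeff_smul, coeff_X_mul, coeff_derivative]
      rcases lt_or_eq_of_le (show N + 1 ≤ j + 1 from by omega) with h2 | h2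
      · rw [coeff_eq_zero_of_natDegree_lt (show p.natDegree < j + 1 from by omega)]
        simp
      · have hj : j = N := by omega
        subst hj
        simp only [nsmul_eq_mul, smul_eq_mul]
        push_cast
        ring

/-- Let `S` be a complex polynomial of degree `m` and suppose `Q` is a
polynomial solution of degree `n` of the ODE with data `S`. Then the reversed polynomial
`Q̃(t) = t^n·Q(1/t)` solves the ODE with data `t^{n−m−2}·S̃(t)`, where `S̃(t) = t^m·S(1/t)`. -/
theorem stmt11 (S Q : Polynomial ℂ) (m n : ℕ) (hS : S.degree = m) (hQ : Q.degree = n)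
    (hode : SolvesODEPoly S Q) :
    SolvesODEPoly (X ^ (n - m - 2) * S.reverse) Q.reverse := by
  have hQ0 : Q ≠ 0 := fun h => by simp [h] at hQ
  have hS0 : S ≠ 0 := fun h => by simp [h] at hS
  have hn : Q.natDegree = n := natDegree_eq_of_degree_eq_some hQ
  have hm : S.natDegree = m := natDegree_eq_of_degree_eq_some hS
  have hode0 : (X * derivative (derivative Q) + derivative Q) * Q
      - X * (derivative Q) ^ 2 = S * Q := hode
  set R : Polynomial ℂ := n • Q - X * derivative Q with hRdef
  have hQc : ∀ i, n < i → Q.coeff i = 0 := fun i hi =>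
    coeff_eq_zero_of_natDegree_lt (by omega)
  have hRc : ∀ i, n ≤ i → R.coeff i = 0 := fun i hi => coeff_aux Q n hQc hi
  have hQ'c : ∀ i, n ≤ i → (derivative Q).coeff i = 0 := by
    intro i hi
    rw [coeff_derivative, hQc (i + 1) (by omega), zero_mul]
  have hR'c : ∀ i, n ≤ i + 1 → (derivative R).coeff i = 0 := by
    intro i hi
    rw [coeff_derivative, hRc (i + 1) (by omega), zero_mul]
  -- the ODE left-hand side equals R * Q' - R' * Q
  have hode2 : R * derivative Q - derivative R * Q = S * Q := by
    rw [← hode0, hRdef]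
    simp only [nsmul_eq_mul, derivative_sub, derivative_mul, derivative_natCast, derivative_X]
    ring
  -- degree bound : m + 2 ≤ n
  have hmn : m + 2 ≤ n := by
    by_contra hc
    push_neg at hc
    have h1 : (S * Q).coeff (m + n) ≠ 0 := by
      rw [← hm, ← hn, coeff_mul_degree_add_degree]
      exact mul_ne_zero (leadingCoeff_ne_zero.mpr hS0) (leadingCoeff_ne_zero.mpr hQ0)
    apply h1
    have hA : (R * derivative Q).coeff (m + n) = 0 := by
      rw [coeff_mul]
      apply Finset.sum_eq_zero
      intro x hx
      rw [Finset.HasAntidiagonal.mem_antidiagonal] at hx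
      rcases (by omega : n ≤ x.1 ∨ n ≤ x.2) with h | h
      · rw [hRc _ h, zero_mul]
      · rw [hQ'c _ h, mul_zero]
    have hB : (derivative R * Q).coeff (m + n) = 0 := by
      rw [coeff_mul]
      apply Finset.sum_eq_zero
      intro x hx
      rw [Finset.HasAntidiagonal.mem_antidiagonal] at hx
      rcases (by omega : n ≤ x.1 + 1 ∨ n < x.2) with h | h
      · rw [hR'c _ h, zero_mul]
      · rw [hQc _ h, mul_zero]
    rw [← hode2, coeff_sub, hA, hB, sub_zero]
  -- second auxiliary polynomial
  set R2 : Polynomial ℂ := (n - 1) • R - X * derivative R with hR2def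
  have hR2c : ∀ i, n - 1 ≤ i → R2.coeff i = 0 := fun i hi =>
    coeff_aux R (n - 1) (fun j hj => hRc j (by omega)) hi
  have hdegR : R.natDegree ≤ n - 1 :=
    natDegree_le_iff_coeff_eq_zero.mpr fun k hk => hRc k (by omega)
  have hdegR2 : R2.natDegree ≤ n - 2 :=
    natDegree_le_iff_coeff_eq_zero.mpr fun k hk => hR2c k (by omega)
  have e1 : derivative (reflect n Q) = reflect (n - 1) R := by
    rw [hRdef]
    have h := derivative_reflect Q (n - 1) (by omega)
    rwa [show n - 1 + 1 = n from by omega] at h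
  have e2 : derivative (reflect (n - 1) R) = reflect (n - 2) R2 := by
    rw [hR2def]
    have h := derivative_reflect R (n - 2) (by omega)
    rwa [show n - 2 + 1 = n - 1 from by omega] at h
  have hrevQ : Q.reverse = reflect n Q := by rw [Polynomial.reverse, hn]
  have hrevS : S.reverse = reflect m S := by rw [Polynomial.reverse, hm]
  -- the key algebraic identity
  have key : (R2 + R) * Q - R * R = X * (S * Q) := by
    rw [← hode0, hR2def, hRdef]
    simp only [nsmul_eq_mul, derivative_sub, derivative_mul, derivative_natCast, derivative_X]
    rw [Nat.cast_sub (show 1 ≤ n from by omega)]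
    push_cast
    ring
  have hXrefl : reflect (n - m - 1) (X : Polynomial ℂ) = X ^ (n - m - 2) := by
    have h := reflect_monomial (n - m - 1) 1 (R := ℂ)
    rwa [pow_one, revAt_le (show 1 ≤ n - m - 1 from by omega),
      show n - m - 1 - 1 = n - m - 2 from by omega] at h
  unfold SolvesODEPoly
  rw [hrevQ, hrevS, e1, e2, X_mul_reflect R2 (n - 2) hdegR2,
    show n - 2 + 1 = n - 1 from by omega, sq, ← mul_assoc,
    X_mul_reflect R (n - 1) hdegR, show n - 1 + 1 = n from by omega,
    ← reflect_add, ← reflect_mul (R2 + R) Q (le_trans (natDegree_add_le _ _) (by omega)) hn.le,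
    ← reflect_mul R R (by omega) hdegR, show n + (n - 1) = n - 1 + n from by omega,
    ← reflect_sub, key, show n - 1 + n = (n - m - 1) + (m + n) from by omega,
    reflect_mul X (S * Q) (by simp [natDegree_X]; omega)
      (le_trans (natDegree_mul_le) (by omega)),
    reflect_mul S Q hm.le hn.le, hXrefl]
  ring
end

section
/- Let S(t) be a complex polynomial of degree m and suppose Q(t) is a polynomial solution of degree m+2 of the ODE (t·Q'' + Q')·Q − t·(Q')² = S·Q. Then the reversed polynomial Q̃(t) = t^{m+2}·Q(1/t) solves the same ODE with data the reversed polynomial S̃(t) = t^m·S(1/t). -/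
open Polynomial

/-- Euler operator on the reversed polynomial. -/
lemma theta_reflect (N : ℕ) (P : Polynomial ℂ) (h : P.natDegree ≤ N) :
    X * derivative (reflect N P) =
      C (N : ℂ) * reflect N P - reflect N (X * derivative P) := by
  ext k
  rcases k with _ | j
  · simp only [mul_coeff_zero, coeff_X_zero, zero_mul, coeff_sub, coeff_C_mul, coeff_reflect,
      revAt_zero]
    rcases N with _ | M
    · simp
    · rw [coeff_X_mul, coeff_derivative]
      simp only [coeff_C]
      push_cast
      ring
  · simp only [coeff_X_mul, coeff_derivative, coeff_sub, coeff_C_mul, coeff_reflect]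
    by_cases hjN : j + 1 ≤ N
    · rw [revAt_le hjN]
      rcases Nat.eq_zero_or_pos (N - (j + 1)) with h0 | hpos
      · rw [h0, show N = j + 1 by omega]
        simp only [mul_coeff_zero, coeff_X_zero, zero_mul, sub_zero]
        push_cast
        ring
      · obtain ⟨M, hM⟩ : ∃ M, N - (j + 1) = M + 1 := ⟨N - (j + 1) - 1, by omega⟩
        rw [hM, coeff_X_mul, coeff_derivative, show N = M + j + 2 by omega]
        push_cast
        ring
    · rw [revAt_eq_self_of_lt (by omega)]
      have hz : P.coeff (j + 1) = 0 := coeff_eq_zero_of_natDegree_lt (by omega)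
      rw [coeff_X_mul, coeff_derivative, hz]
      simp

lemma reflect_sub' (N : ℕ) (a b : Polynomial ℂ) :
    reflect N (a - b) = reflect N a - reflect N b := by
  ext k
  simp [coeff_reflect]

/-- Let `S` be a complex polynomial of degree `m` and suppose `Q` is a
polynomial solution of degree `m+2` of the ODE with data `S`. Then the reversed polynomial
`Q̃(t) = t^{m+2}·Q(1/t)` solves the ODE with data `S̃(t) = t^m·S(1/t)`. -/
theorem stmt12 (S Q : Polynomial ℂ) (m : ℕ) (hS : S.degree = m) (hQ : Q.degree = (m + 2 : ℕ))
    (hode : SolvesODEPoly S Q) :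
    SolvesODEPoly S.reverse Q.reverse := by
  have hQn : Q.natDegree = m + 2 := natDegree_eq_of_degree_eq_some hQ
  have hSn : S.natDegree = m := natDegree_eq_of_degree_eq_some hS
  set n : ℕ := m + 2 with hn
  set R : Polynomial ℂ := reflect n Q with hR
  have hQrev : Q.reverse = R := by rw [reverse, hQn]
  have hSrev : S.reverse = reflect m S := by rw [reverse, hSn]
  have hd1 : (X * derivative Q).natDegree ≤ n := by
    refine le_trans natDegree_mul_le ?_
    have := natDegree_derivative_le Q
    simp only [natDegree_X]
    omega
  have hd2 : (X * derivative (X * derivative Q)).natDegree ≤ n := by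
    refine le_trans natDegree_mul_le ?_
    have := natDegree_derivative_le (X * derivative Q)
    simp only [natDegree_X]
    omega
  have h1 : X * derivative R = C (n : ℂ) * R - reflect n (X * derivative Q) :=
    theta_reflect n Q (by omega)
  have h1' : X * derivative (reflect n (X * derivative Q)) =
      C (n : ℂ) * reflect n (X * derivative Q) -
        reflect n (X * derivative (X * derivative Q)) :=
    theta_reflect n (X * derivative Q) hd1
  have h2 : X * derivative (X * derivative R) =
      C (n : ℂ) ^ 2 * R - 2 * C (n : ℂ) * reflect n (X * derivative Q) +
        reflect n (X * derivative (X * derivative Q)) := by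
    calc X * derivative (X * derivative R)
        = X * derivative (C (n : ℂ) * R - reflect n (X * derivative Q)) := by rw [h1]
      _ = C (n : ℂ) * (X * derivative R) -
            X * derivative (reflect n (X * derivative Q)) := by
          rw [derivative_sub, derivative_C_mul]; ring
      _ = C (n : ℂ) * (C (n : ℂ) * R - reflect n (X * derivative Q)) -
            (C (n : ℂ) * reflect n (X * derivative Q) -
              reflect n (X * derivative (X * derivative Q))) := by rw [h1, h1']
      _ = _ := by ring
  -- ODE for Q multiplied through by X
  have hMQ : (X * derivative (X * derivative Q)) * Q - (X * derivative Q) ^ 2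
      = X * (S * Q) := by
    have hprodQ : derivative (X * derivative Q) =
        derivative Q + X * derivative (derivative Q) := by
      rw [derivative_mul, derivative_X]; ring
    calc (X * derivative (X * derivative Q)) * Q - (X * derivative Q) ^ 2
        = X * ((X * derivative (derivative Q) + derivative Q) * Q
            - X * (derivative Q) ^ 2) := by rw [hprodQ]; ring
      _ = X * (S * Q) := by rw [hode]
  -- the reversed ODE, multiplied through by X
  have key : X * ((X * derivative (derivative R) + derivative R) * R
        - X * (derivative R) ^ 2)
      = (X * derivative (X * derivative R)) * R - (X * derivative R) ^ 2 := by
    rw [derivative_mul, derivative_X]; ring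
  have step : (X * derivative (X * derivative R)) * R - (X * derivative R) ^ 2
      = reflect n (X * derivative (X * derivative Q)) * R -
          reflect n (X * derivative Q) * reflect n (X * derivative Q) := by
    rw [h2, h1]; ring
  have hmul1 : reflect n (X * derivative (X * derivative Q)) * R
      = reflect (n + n) ((X * derivative (X * derivative Q)) * Q) :=
    (reflect_mul _ _ hd2 (le_of_eq hQn)).symm
  have hmul2 : reflect n (X * derivative Q) * reflect n (X * derivative Q)
      = reflect (n + n) ((X * derivative Q) * (X * derivative Q)) :=
    (reflect_mul _ _ hd1 hd1).symm
  have hX2 : reflect 2 (X : Polynomial ℂ) = X := by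
    have := reflect_monomial 2 1 (R := ℂ)
    simpa using this
  have hrhs : reflect (n + n) (X * (S * Q)) = X * (reflect m S * R) := by
    have e1 : n + n = 2 + (m + n) := by omega
    rw [e1, reflect_mul (f := (X : Polynomial ℂ)) (g := S * Q)
        (by simp) (le_trans natDegree_mul_le (by omega)),
      reflect_mul (f := S) (g := Q) (le_of_eq hSn) (le_of_eq hQn), hX2]
  have main : X * ((X * derivative (derivative R) + derivative R) * R
        - X * (derivative R) ^ 2) = X * (reflect m S * R) := by
    rw [key, step, hmul1, hmul2, ← reflect_sub']
    rw [show (X * derivative (X * derivative Q)) * Q - (X * derivative Q) * (X * derivative Q)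
        = X * (S * Q) by rw [← hMQ]; ring]
    exact hrhs
  have := mul_left_cancel₀ (X_ne_zero (R := ℂ)) main
  rw [SolvesODEPoly, hQrev, hSrev]
  exact this
end

section
/- Let σ ∈ P_m[x,y] with total degree 2m−2 and let n ≥ m+2. If u ∈ P_n[x,y] solves the PDE u·u_{xy} − u_x·u_y = σ·u, then ũ(x,y) = (xy)^n·u(1/x,1/y) solves the PDE with data (xy)^{n−m−2}·σ̃(x,y), where σ̃(x,y) = (xy)^m·σ(1/x,1/y). -/
open MvPolynomial

/-- A bivariate polynomial `u ∈ ℂ[x,y]` solves the PDE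
`u·u_{xy} − u_x·u_y = σ·u` for the data `σ`, where `x` is the variable `0` and `y` is
the variable `1`. -/
def SolvesPDE (σ u : MvPolynomial (Fin 2) ℂ) : Prop :=
  u * pderiv 0 (pderiv 1 u) - pderiv 0 u * pderiv 1 u = σ * u

/-- For `u = Σ_{i,j=0}^{n−1} a_{ij} x^i y^j ∈ P_n[x,y]`, the reversal
`ũ(x,y) = (xy)^n·u(1/x,1/y) = Σ_{i,j=0}^{n−1} a_{ij} x^{n−i} y^{n−j}`. -/
noncomputable def mvRev (n : ℕ) (u : MvPolynomial (Fin 2) ℂ) : MvPolynomial (Fin 2) ℂ :=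
  ∑ i ∈ Finset.range n, ∑ j ∈ Finset.range n,
    monomial (Finsupp.single (0 : Fin 2) (n - i) + Finsupp.single (1 : Fin 2) (n - j))
      (coeff (Finsupp.single (0 : Fin 2) i + Finsupp.single (1 : Fin 2) j) u)

section Aux
open Finsupp

noncomputable def rv (P Q : ℕ) (d : Fin 2 →₀ ℕ) : Fin 2 →₀ ℕ :=
  Finsupp.single 0 (P - d 0) + Finsupp.single 1 (Q - d 1)

lemma rv_apply0 (P Q : ℕ) (d : Fin 2 →₀ ℕ) : rv P Q d 0 = P - d 0 := by
  simp [rv, Finsupp.single_apply]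

lemma rv_apply1 (P Q : ℕ) (d : Fin 2 →₀ ℕ) : rv P Q d 1 = Q - d 1 := by
  simp [rv, Finsupp.single_apply]

noncomputable def Rv (P Q : ℕ) : MvPolynomial (Fin 2) ℂ →+ MvPolynomial (Fin 2) ℂ :=
  { toFun := AddMonoidAlgebra.mapDomain (rv P Q), map_zero' := AddMonoidAlgebra.mapDomain_zero _,
    map_add' := AddMonoidAlgebra.mapDomain_add _ }

lemma Rv_monomial (P Q : ℕ) (d : Fin 2 →₀ ℕ) (c : ℂ) :
    Rv P Q (monomial d c) = monomial (rv P Q d) c := by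
  rw [← single_eq_monomial, ← single_eq_monomial]
  exact AddMonoidAlgebra.mapDomain_single

lemma Rv_eq_sum (P Q : ℕ) (u : MvPolynomial (Fin 2) ℂ) :
    Rv P Q u = ∑ d ∈ u.support, monomial (rv P Q d) (coeff d u) := by
  conv_lhs => rw [u.as_sum]
  rw [map_sum]
  simp_rw [Rv_monomial]

-- step 1 : X 0 * derivative of a reversed monomial
lemma step1 (P Q : ℕ) (d : Fin 2 →₀ ℕ) (c : ℂ) :
    X (0 : Fin 2) * pderiv (0 : Fin 2) (monomial (rv P Q d) c)
      = monomial (rv P Q d) (c * ((P - d 0 : ℕ) : ℂ)) := by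
  rw [pderiv_monomial, rv_apply0]
  rcases Nat.eq_zero_or_pos (P - d 0) with h | h
  · simp [h]
  · have hexp : Finsupp.single (0 : Fin 2) 1 + (rv P Q d - Finsupp.single 0 1) = rv P Q d := by
      ext a
      simp only [rv, Finsupp.add_apply, Finsupp.tsub_apply, Finsupp.single_apply]
      split_ifs <;> omega
    rw [show (X (0:Fin 2) : MvPolynomial (Fin 2) ℂ) = monomial (Finsupp.single 0 1) 1 from rfl,
      monomial_mul, hexp, one_mul]

lemma step1' (P Q : ℕ) (d : Fin 2 →₀ ℕ) (c : ℂ) :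
    X (1 : Fin 2) * pderiv (1 : Fin 2) (monomial (rv P Q d) c)
      = monomial (rv P Q d) (c * ((Q - d 1 : ℕ) : ℂ)) := by
  rw [pderiv_monomial, rv_apply1]
  rcases Nat.eq_zero_or_pos (Q - d 1) with h | h
  · simp [h]
  · have hexp : Finsupp.single (1 : Fin 2) 1 + (rv P Q d - Finsupp.single 1 1) = rv P Q d := by
      ext a
      simp only [rv, Finsupp.add_apply, Finsupp.tsub_apply, Finsupp.single_apply]
      split_ifs <;> omega
    rw [show (X (1:Fin 2) : MvPolynomial (Fin 2) ℂ) = monomial (Finsupp.single 1 1) 1 from rfl,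
      monomial_mul, hexp, one_mul]

-- step 2 : reversed derivative monomial re-expressed
lemma step2 (P Q : ℕ) (d : Fin 2 →₀ ℕ) (c : ℂ) (hd : d 0 ≤ P) :
    monomial (rv (P-1) Q (d - Finsupp.single 0 1)) (c * (d 0 : ℕ))
      = monomial (rv P Q d) (c * ((d 0 : ℕ) : ℂ)) := by
  rcases Nat.eq_zero_or_pos (d 0) with h | h
  · simp [h]
  · have hexp : rv (P-1) Q (d - Finsupp.single 0 1) = rv P Q d := by
      ext a
      simp only [rv, Finsupp.add_apply, Finsupp.tsub_apply, Finsupp.single_apply]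
      split_ifs <;> omega
    rw [hexp]

lemma step2' (P Q : ℕ) (d : Fin 2 →₀ ℕ) (c : ℂ) (hd : d 1 ≤ Q) :
    monomial (rv P (Q-1) (d - Finsupp.single 1 1)) (c * (d 1 : ℕ))
      = monomial (rv P Q d) (c * ((d 1 : ℕ) : ℂ)) := by
  rcases Nat.eq_zero_or_pos (d 1) with h | h
  · simp [h]
  · have hexp : rv P (Q-1) (d - Finsupp.single 1 1) = rv P Q d := by
      ext a
      simp only [rv, Finsupp.add_apply, Finsupp.tsub_apply, Finsupp.single_apply]
      split_ifs <;> omega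
    rw [hexp]

lemma Rv_pderiv0 (P Q : ℕ) (u : MvPolynomial (Fin 2) ℂ) (h : degreeOf 0 u ≤ P) :
    X (0:Fin 2) * pderiv (0:Fin 2) (Rv P Q u)
      = C (P:ℂ) * Rv P Q u - Rv (P-1) Q (pderiv 0 u) := by
  have hrep : pderiv (0:Fin 2) u
      = ∑ d ∈ u.support, monomial (d - Finsupp.single 0 1) (coeff d u * d 0) := by
    conv_lhs => rw [u.as_sum]
    rw [map_sum]; simp_rw [pderiv_monomial]
  rw [Rv_eq_sum P Q u, hrep, map_sum, map_sum, Finset.mul_sum, Finset.mul_sum,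
    ← Finset.sum_sub_distrib]
  refine Finset.sum_congr rfl fun d hd => ?_
  have hd0 : d 0 ≤ P := le_trans ((degreeOf_le_iff.mp le_rfl) d hd) h
  rw [step1, Rv_monomial, step2 _ _ _ _ hd0, C_mul_monomial, ← map_sub]
  congr 1
  rw [Nat.cast_sub hd0]
  ring

lemma Rv_pderiv1 (P Q : ℕ) (u : MvPolynomial (Fin 2) ℂ) (h : degreeOf 1 u ≤ Q) :
    X (1:Fin 2) * pderiv (1:Fin 2) (Rv P Q u)
      = C (Q:ℂ) * Rv P Q u - Rv P (Q-1) (pderiv 1 u) := by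
  have hrep : pderiv (1:Fin 2) u
      = ∑ d ∈ u.support, monomial (d - Finsupp.single 1 1) (coeff d u * d 1) := by
    conv_lhs => rw [u.as_sum]
    rw [map_sum]; simp_rw [pderiv_monomial]
  rw [Rv_eq_sum P Q u, hrep, map_sum, map_sum, Finset.mul_sum, Finset.mul_sum,
    ← Finset.sum_sub_distrib]
  refine Finset.sum_congr rfl fun d hd => ?_
  have hd1 : d 1 ≤ Q := le_trans ((degreeOf_le_iff.mp le_rfl) d hd) h
  rw [step1', Rv_monomial, step2' _ _ _ _ hd1, C_mul_monomial, ← map_sub]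
  congr 1
  rw [Nat.cast_sub hd1]
  ring

lemma Rv_mul (P1 Q1 P2 Q2 : ℕ) (u v : MvPolynomial (Fin 2) ℂ)
    (h1 : degreeOf 0 u ≤ P1) (h2 : degreeOf 1 u ≤ Q1)
    (h3 : degreeOf 0 v ≤ P2) (h4 : degreeOf 1 v ≤ Q2) :
    Rv P1 Q1 u * Rv P2 Q2 v = Rv (P1+P2) (Q1+Q2) (u * v) := by
  conv_rhs => rw [u.as_sum, v.as_sum, Finset.sum_mul_sum]
  rw [Rv_eq_sum, Rv_eq_sum, Finset.sum_mul_sum, map_sum]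
  refine Finset.sum_congr rfl fun d hd => ?_
  rw [map_sum]
  refine Finset.sum_congr rfl fun e he => ?_
  have hd0 : d 0 ≤ P1 := le_trans ((degreeOf_le_iff.mp le_rfl) d hd) h1
  have hd1 : d 1 ≤ Q1 := le_trans ((degreeOf_le_iff.mp le_rfl) d hd) h2
  have he0 : e 0 ≤ P2 := le_trans ((degreeOf_le_iff.mp le_rfl) e he) h3
  have he1 : e 1 ≤ Q2 := le_trans ((degreeOf_le_iff.mp le_rfl) e he) h4
  have hst : rv P1 Q1 d + rv P2 Q2 e = rv (P1+P2) (Q1+Q2) (d+e) := by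
    ext a
    simp only [rv, Finsupp.add_apply, Finsupp.single_apply]
    split_ifs <;> omega
  rw [monomial_mul, monomial_mul, Rv_monomial, hst]

lemma Rv_shift (P Q P' Q' : ℕ) (u : MvPolynomial (Fin 2) ℂ)
    (hP : P' ≤ P) (hQ : Q' ≤ Q) (hx : degreeOf 0 u ≤ P') (hy : degreeOf 1 u ≤ Q') :
    Rv P Q u = X 0 ^ (P - P') * (X 1 ^ (Q - Q') * Rv P' Q' u) := by
  rw [Rv_eq_sum, Rv_eq_sum, Finset.mul_sum, Finset.mul_sum]
  refine Finset.sum_congr rfl fun d hd => ?_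
  have hd0 : d 0 ≤ P' := le_trans ((degreeOf_le_iff.mp le_rfl) d hd) hx
  have hd1 : d 1 ≤ Q' := le_trans ((degreeOf_le_iff.mp le_rfl) d hd) hy
  have hst : Finsupp.single (0:Fin 2) (P - P') + (Finsupp.single (1:Fin 2) (Q - Q') + rv P' Q' d)
      = rv P Q d := by
    ext a
    simp only [rv, Finsupp.add_apply, Finsupp.single_apply]
    split_ifs <;> omega
  rw [X_pow_eq_monomial, X_pow_eq_monomial, monomial_mul, monomial_mul, one_mul, one_mul, hst]

lemma Dap0 (i j : ℕ) : (Finsupp.single (0:Fin 2) i + Finsupp.single (1:Fin 2) j) 0 = i := by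
  simp [Finsupp.single_apply]

lemma Dap1 (i j : ℕ) : (Finsupp.single (0:Fin 2) i + Finsupp.single (1:Fin 2) j) 1 = j := by
  simp [Finsupp.single_apply]

lemma mvRev_eq_Rv (n : ℕ) (u : MvPolynomial (Fin 2) ℂ) (hn : 1 ≤ n)
    (hx : degreeOf 0 u ≤ n-1) (hy : degreeOf 1 u ≤ n-1) :
    mvRev n u = Rv n n u := by
  rw [Rv_eq_sum, mvRev]
  have hterm : ∀ i j : ℕ,
      monomial (Finsupp.single (0:Fin 2) (n-i) + Finsupp.single (1:Fin 2) (n-j))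
        (coeff (Finsupp.single (0:Fin 2) i + Finsupp.single (1:Fin 2) j) u)
      = monomial (rv n n (Finsupp.single (0:Fin 2) i + Finsupp.single (1:Fin 2) j))
        (coeff (Finsupp.single (0:Fin 2) i + Finsupp.single (1:Fin 2) j) u) := by
    intro i j
    have hst : Finsupp.single (0:Fin 2) (n-i) + Finsupp.single (1:Fin 2) (n-j)
        = rv n n (Finsupp.single (0:Fin 2) i + Finsupp.single (1:Fin 2) j) := by
      ext a
      simp only [rv, Finsupp.add_apply, Finsupp.single_apply, Dap0, Dap1]
      split_ifs <;> omega
    rw [hst]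
  simp_rw [hterm]
  rw [← Finset.sum_product']
  have hinj : ∀ p ∈ Finset.range n ×ˢ Finset.range n, ∀ q ∈ Finset.range n ×ˢ Finset.range n,
      (Finsupp.single (0:Fin 2) p.1 + Finsupp.single (1:Fin 2) p.2)
        = (Finsupp.single (0:Fin 2) q.1 + Finsupp.single (1:Fin 2) q.2) → p = q := by
    intro p _ q _ hpq
    have h0 : p.1 = q.1 := by
      have := congrArg (fun f : Fin 2 →₀ ℕ => f 0) hpq
      simpa [Dap0] using this
    have h1 : p.2 = q.2 := by
      have := congrArg (fun f : Fin 2 →₀ ℕ => f 1) hpq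
      simpa [Dap1] using this
    exact Prod.ext h0 h1
  rw [← Finset.sum_image (g := fun p : ℕ × ℕ => Finsupp.single (0:Fin 2) p.1 + Finsupp.single (1:Fin 2) p.2)
    (f := fun d => monomial (rv n n d) (coeff d u)) hinj]
  refine (Finset.sum_subset ?_ ?_).symm
  · intro d hd
    rw [Finset.mem_image]
    refine ⟨(d 0, d 1), ?_, ?_⟩
    · rw [Finset.mem_product, Finset.mem_range, Finset.mem_range]
      constructor
      · exact lt_of_le_of_lt ((degreeOf_le_iff.mp le_rfl) d hd |>.trans hx) (by omega)
      · exact lt_of_le_of_lt ((degreeOf_le_iff.mp le_rfl) d hd |>.trans hy) (by omega)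
    · ext a
      fin_cases a <;> simp [Finsupp.single_apply]
  · intro d _ hd
    rw [MvPolynomial.notMem_support_iff] at hd
    simp [hd]

lemma degreeOf_pderiv_le (i j : Fin 2) (u : MvPolynomial (Fin 2) ℂ) :
    degreeOf j (pderiv i u) ≤ degreeOf j u := by
  rw [degreeOf_le_iff]
  intro mm hmm
  have hrep : pderiv i u = ∑ d ∈ u.support, monomial (d - Finsupp.single i 1) (coeff d u * d i) := by
    conv_lhs => rw [u.as_sum]
    rw [map_sum]; simp_rw [pderiv_monomial]
  rw [hrep, MvPolynomial.mem_support_iff, coeff_sum] at hmm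
  obtain ⟨d, hd, hne⟩ := Finset.exists_ne_zero_of_sum_ne_zero hmm
  rw [coeff_monomial] at hne
  by_cases h : d - Finsupp.single i 1 = mm
  · have h2 : mm j ≤ d j := by
      rw [← h, Finsupp.tsub_apply]
      exact Nat.sub_le _ _
    exact h2.trans ((degreeOf_le_iff.mp le_rfl) d hd)
  · simp [h] at hne
end Aux

/-- Let `σ ∈ P_m[x,y]` have total degree `2m−2` and let `n ≥ m+2`.
If `u ∈ P_n[x,y]` solves the PDE for the data `σ`, then `ũ(x,y) = (xy)^n·u(1/x,1/y)`
solves the PDE with data `(xy)^{n−m−2}·σ̃(x,y)`, where `σ̃(x,y) = (xy)^m·σ(1/x,1/y)`. -/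
theorem stmt16 (m n : ℕ) (hm : 1 ≤ m) (hn : m + 2 ≤ n)
    (σ u : MvPolynomial (Fin 2) ℂ)
    (hσx : σ.degreeOf 0 ≤ m - 1) (hσy : σ.degreeOf 1 ≤ m - 1)
    (hσd : σ.totalDegree = 2 * m - 2)
    (hux : u.degreeOf 0 ≤ n - 1) (huy : u.degreeOf 1 ≤ n - 1)
    (hode : SolvesPDE σ u) :
    SolvesPDE ((X 0 * X 1) ^ (n - m - 2) * mvRev m σ) (mvRev n u) := by
  have hn1 : 1 ≤ n := by omega
  have hmvu : mvRev n u = Rv n n u := mvRev_eq_Rv n u hn1 hux huy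
  have hmvσ : mvRev m σ = Rv m m σ := mvRev_eq_Rv m σ hm hσx hσy
  unfold SolvesPDE
  rw [hmvu, hmvσ]
  set U := Rv n n u with hU
  set ux := pderiv (0:Fin 2) u with hux'
  set uy := pderiv (1:Fin 2) u with huy'
  set uxy := pderiv (0:Fin 2) (pderiv (1:Fin 2) u) with huxy'
  have hux_n : degreeOf 0 u ≤ n := hux.trans (by omega)
  have huy_n : degreeOf 1 u ≤ n := huy.trans (by omega)
  have hdx_uy : degreeOf 0 uy ≤ n := (degreeOf_pderiv_le 1 0 u).trans hux_n
  have e5 : X (0:Fin 2) * pderiv 0 U = C (n:ℂ) * U - Rv (n-1) n ux := Rv_pderiv0 n n u hux_n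
  have e6 : X (1:Fin 2) * pderiv 1 U = C (n:ℂ) * U - Rv n (n-1) uy := Rv_pderiv1 n n u huy_n
  have e7 : X 0 * (X 1 * pderiv 0 (pderiv 1 U))
      = C (n:ℂ) * (C (n:ℂ) * U - Rv (n-1) n ux)
        - (C (n:ℂ) * Rv n (n-1) uy - Rv (n-1) (n-1) uxy) := by
    have h1 : X (0:Fin 2) * pderiv 0 (X 1 * pderiv 1 U) = X 0 * (X 1 * pderiv 0 (pderiv 1 U)) := by
      rw [pderiv_mul]
      have h2 : pderiv (0:Fin 2) (X (1:Fin 2) : MvPolynomial (Fin 2) ℂ) = 0 :=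
        pderiv_X_of_ne (by decide)
      rw [h2]; ring
    calc X 0 * (X 1 * pderiv 0 (pderiv 1 U)) = X 0 * pderiv 0 (X 1 * pderiv 1 U) := h1.symm
    _ = X 0 * pderiv 0 (C (n:ℂ) * U - Rv n (n-1) uy) := by rw [e6]
    _ = C (n:ℂ) * (X 0 * pderiv 0 U) - X 0 * pderiv 0 (Rv n (n-1) uy) := by
        rw [map_sub, pderiv_mul, pderiv_C]; ring
    _ = C (n:ℂ) * (C (n:ℂ) * U - Rv (n-1) n ux)
        - (C (n:ℂ) * Rv n (n-1) uy - Rv (n-1) (n-1) uxy) := by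
        rw [e5, Rv_pderiv0 n (n-1) uy hdx_uy]
  have key : (X 0 * X 1 : MvPolynomial (Fin 2) ℂ)
        * (U * pderiv 0 (pderiv 1 U) - pderiv 0 U * pderiv 1 U)
      = U * Rv (n-1) (n-1) uxy - Rv (n-1) n ux * Rv n (n-1) uy := by
    linear_combination U * e7 - (X 1 * pderiv 1 U) * e5 - (C (n:ℂ) * U - Rv (n-1) n ux) * e6
  have hdeg_ux0 : degreeOf 0 ux ≤ n-1 := (degreeOf_pderiv_le 0 0 u).trans hux
  have hdeg_ux1 : degreeOf 1 ux ≤ n := (degreeOf_pderiv_le 0 1 u).trans huy_n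
  have hdeg_uy1 : degreeOf 1 uy ≤ n-1 := (degreeOf_pderiv_le 1 1 u).trans huy
  have hdeg_uxy0 : degreeOf 0 uxy ≤ n-1 := (degreeOf_pderiv_le 0 0 uy).trans ((degreeOf_pderiv_le 1 0 u).trans hux)
  have hdeg_uxy1 : degreeOf 1 uxy ≤ n-1 := (degreeOf_pderiv_le 0 1 uy).trans ((degreeOf_pderiv_le 1 1 u).trans huy)
  have p1 : U * Rv (n-1) (n-1) uxy = Rv (n + (n-1)) (n + (n-1)) (u * uxy) :=
    Rv_mul n n (n-1) (n-1) u uxy hux_n huy_n hdeg_uxy0 hdeg_uxy1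
  have p2 : Rv (n-1) n ux * Rv n (n-1) uy = Rv ((n-1) + n) (n + (n-1)) (ux * uy) :=
    Rv_mul (n-1) n n (n-1) ux uy hdeg_ux0 hdeg_ux1 hdx_uy hdeg_uy1
  have hidx : (n-1) + n = n + (n-1) := by omega
  rw [hidx] at p2
  have hode' : u * uxy - ux * uy = σ * u := hode
  have p3 : U * Rv (n-1) (n-1) uxy - Rv (n-1) n ux * Rv n (n-1) uy
      = Rv (n+(n-1)) (n+(n-1)) (σ * u) := by
    rw [p1, p2, ← map_sub, hode']
  have p4 : Rv (n+(n-1)) (n+(n-1)) (σ * u) = Rv (n-1) (n-1) σ * U := by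
    have h := Rv_mul (n-1) (n-1) n n σ u (hσx.trans (by omega)) (hσy.trans (by omega)) hux_n huy_n
    rw [hidx] at h
    exact h.symm
  have p5 : Rv (n-1) (n-1) σ = X 0 ^ ((n-1) - m) * (X 1 ^ ((n-1) - m) * Rv m m σ) :=
    Rv_shift (n-1) (n-1) m m σ (by omega) (by omega) (hσx.trans (by omega)) (hσy.trans (by omega))
  have hk : (n-1) - m = (n - m - 2) + 1 := by omega
  have hX : (X (0:Fin 2) * X 1 : MvPolynomial (Fin 2) ℂ) ≠ 0 :=
    mul_ne_zero (X_ne_zero _) (X_ne_zero _)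
  apply mul_left_cancel₀ hX
  rw [key, p3, p4, p5, hk]
  ring
end

section
/- Let σ ∈ P_m[x,y] with total degree 2m−2. If u ∈ P_{m+2}[x,y] solves the PDE u·u_{xy} − u_x·u_y = σ·u, then ũ(x,y) = (xy)^{m+2}·u(1/x,1/y) solves the PDE with data σ̃(x,y) = (xy)^m·σ(1/x,1/y). -/
open MvPolynomial Finsupp

noncomputable def F2 (N : ℕ) (d : Fin 2 →₀ ℕ) : Fin 2 →₀ ℕ :=
  Finsupp.single 0 (Polynomial.revAt N (d 0)) + Finsupp.single 1 (Polynomial.revAt N (d 1))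

noncomputable def Rev (N : ℕ) : MvPolynomial (Fin 2) ℂ →+ MvPolynomial (Fin 2) ℂ :=
  (AddMonoidAlgebra.mapDomainLinearMap ℂ ℂ (F2 N)).toAddMonoidHom

lemma Rev_monomial (N : ℕ) (d : Fin 2 →₀ ℕ) (c : ℂ) :
    Rev N (monomial d c) = monomial (F2 N d) c := by
  rw [← single_eq_monomial, ← single_eq_monomial]
  show AddMonoidAlgebra.mapDomainLinearMap ℂ ℂ (F2 N) _ = _
  exact AddMonoidAlgebra.mapDomainLinearMap_single _ _ _

lemma Rev_eq (N : ℕ) (p : MvPolynomial (Fin 2) ℂ) :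
    Rev N p = ∑ d ∈ p.support, monomial (F2 N d) (coeff d p) := by
  conv_lhs => rw [← support_sum_monomial_coeff p]
  rw [map_sum]
  simp [Rev_monomial]

lemma fin2_eq (d : Fin 2 →₀ ℕ) :
    d = Finsupp.single 0 (d 0) + Finsupp.single 1 (d 1) := by
  ext j
  fin_cases j <;> simp [Finsupp.single_apply]

lemma F2_apply_zero (N : ℕ) (d : Fin 2 →₀ ℕ) : F2 N d 0 = Polynomial.revAt N (d 0) := by
  simp [F2, Finsupp.single_apply]

lemma F2_apply_one (N : ℕ) (d : Fin 2 →₀ ℕ) : F2 N d 1 = Polynomial.revAt N (d 1) := by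
  simp [F2, Finsupp.single_apply]

lemma F2_apply (N : ℕ) (d : Fin 2 →₀ ℕ) (i : Fin 2) :
    F2 N d i = Polynomial.revAt N (d i) := by
  fin_cases i
  · exact F2_apply_zero N d
  · exact F2_apply_one N d

lemma F2_add {N M : ℕ} {d e : Fin 2 →₀ ℕ} (hd0 : d 0 ≤ N) (hd1 : d 1 ≤ N)
    (he0 : e 0 ≤ M) (he1 : e 1 ≤ M) : F2 N d + F2 M e = F2 (N + M) (d + e) := by
  unfold F2
  rw [Polynomial.revAt_le hd0, Polynomial.revAt_le hd1, Polynomial.revAt_le he0,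
    Polynomial.revAt_le he1, Finsupp.add_apply, Finsupp.add_apply,
    Polynomial.revAt_le (by omega : d 0 + e 0 ≤ N + M),
    Polynomial.revAt_le (by omega : d 1 + e 1 ≤ N + M)]
  have h0 : N + M - (d 0 + e 0) = (N - d 0) + (M - e 0) := by omega
  have h1 : N + M - (d 1 + e 1) = (N - d 1) + (M - e 1) := by omega
  rw [h0, h1, Finsupp.single_add, Finsupp.single_add]
  abel

noncomputable def euler (i : Fin 2) (p : MvPolynomial (Fin 2) ℂ) : MvPolynomial (Fin 2) ℂ :=
  X i * pderiv i p

lemma euler_monomial (i : Fin 2) (d : Fin 2 →₀ ℕ) (c : ℂ) :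
    euler i (monomial d c) = monomial d (c * d i) := by
  rcases Nat.eq_zero_or_pos (d i) with h | h
  · simp [euler, pderiv_monomial, h]
  · have hd : Finsupp.single i 1 + (d - Finsupp.single i 1) = d := by
      ext j
      rcases eq_or_ne j i with rfl | hj
      · simp [Finsupp.single_apply]; omega
      · simp [Finsupp.single_apply, Ne.symm hj, hj]
    rw [euler, pderiv_monomial, X, monomial_mul, hd, one_mul]

lemma euler_sum {s : Finset α} {f : α → MvPolynomial (Fin 2) ℂ} (i : Fin 2) :
    euler i (∑ x ∈ s, f x) = ∑ x ∈ s, euler i (f x) := by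
  simp [euler, map_sum, Finset.mul_sum]

lemma euler_eq (i : Fin 2) (p : MvPolynomial (Fin 2) ℂ) :
    euler i p = ∑ d ∈ p.support, monomial d (coeff d p * d i) := by
  conv_lhs => rw [← support_sum_monomial_coeff p]
  rw [euler_sum]
  simp [euler_monomial]

lemma coeff_euler (i : Fin 2) (d : Fin 2 →₀ ℕ) (p : MvPolynomial (Fin 2) ℂ) :
    coeff d (euler i p) = coeff d p * d i := by
  rw [euler_eq, coeff_sum]
  rcases (em (d ∈ p.support)) with h | h
  · rw [Finset.sum_eq_single_of_mem d h (fun e _ hne => by rw [coeff_monomial, if_neg hne]),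
      coeff_monomial, if_pos rfl]
  · rw [Finset.sum_eq_zero (fun e he => by
      rw [coeff_monomial, if_neg (fun hh : e = d => h (hh ▸ he))]),
      MvPolynomial.notMem_support_iff.mp h, zero_mul]

lemma euler_support_subset (i : Fin 2) (p : MvPolynomial (Fin 2) ℂ) :
    (euler i p).support ⊆ p.support := by
  intro d hd
  rw [MvPolynomial.mem_support_iff] at hd ⊢
  rw [coeff_euler] at hd
  exact fun h => hd (by rw [h, zero_mul])

lemma euler_rev (i : Fin 2) (N : ℕ) (p : MvPolynomial (Fin 2) ℂ)
    (h : ∀ d ∈ p.support, d i ≤ N) :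
    euler i (Rev N p) = N • Rev N p - Rev N (euler i p) := by
  rw [eq_sub_iff_add_eq]
  have h1 : euler i (Rev N p)
      = ∑ d ∈ p.support, monomial (F2 N d) (coeff d p * ((N : ℂ) - d i)) := by
    rw [Rev_eq, euler_sum]
    refine Finset.sum_congr rfl fun d hd => ?_
    rw [euler_monomial, F2_apply, Polynomial.revAt_le (h d hd), Nat.cast_sub (h d hd)]
  have h2 : Rev N (euler i p) = ∑ d ∈ p.support, monomial (F2 N d) (coeff d p * d i) := by
    rw [euler_eq, map_sum]
    simp [Rev_monomial]
  rw [h1, h2, Rev_eq, Finset.smul_sum, ← Finset.sum_add_distrib]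
  refine Finset.sum_congr rfl fun d hd => ?_
  rw [← map_add, ← map_nsmul]
  congr 1
  push_cast
  ring

lemma Rev_mul (N M : ℕ) (p q : MvPolynomial (Fin 2) ℂ)
    (hp : ∀ d ∈ p.support, d 0 ≤ N ∧ d 1 ≤ N)
    (hq : ∀ e ∈ q.support, e 0 ≤ M ∧ e 1 ≤ M) :
    Rev N p * Rev M q = Rev (N + M) (p * q) := by
  conv_rhs => rw [← support_sum_monomial_coeff p, ← support_sum_monomial_coeff q]
  rw [Finset.sum_mul_sum, map_sum, Rev_eq, Rev_eq, Finset.sum_mul_sum]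
  refine Finset.sum_congr rfl fun d hd => ?_
  rw [map_sum]
  refine Finset.sum_congr rfl fun e he => ?_
  rw [monomial_mul, monomial_mul, Rev_monomial,
    F2_add (hp d hd).1 (hp d hd).2 (hq e he).1 (hq e he).2]

lemma mvRev_eq (n : ℕ) (p : MvPolynomial (Fin 2) ℂ)
    (hp : ∀ d ∈ p.support, d 0 < n ∧ d 1 < n) :
    mvRev n p = Rev n p := by
  classical
  set s : ℕ × ℕ → (Fin 2 →₀ ℕ) :=
    fun ij => Finsupp.single (0 : Fin 2) ij.1 + Finsupp.single (1 : Fin 2) ij.2 with hs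
  have hs0 : ∀ ij, s ij 0 = ij.1 := by intro ij; simp [hs, Finsupp.single_apply]
  have hs1 : ∀ ij, s ij 1 = ij.2 := by intro ij; simp [hs, Finsupp.single_apply]
  have hinj : Function.Injective s := by
    intro a b hab
    have h0 := congrArg (fun d => d 0) hab
    have h1 := congrArg (fun d => d 1) hab
    simp only [hs0, hs1] at h0 h1
    exact Prod.ext h0 h1
  have hT : p.support ⊆ (Finset.range n ×ˢ Finset.range n).image s := by
    intro d hd
    refine Finset.mem_image.mpr ⟨(d 0, d 1), ?_, ?_⟩
    · rw [Finset.mem_product, Finset.mem_range, Finset.mem_range]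
      exact (hp d hd)
    · exact (fin2_eq d).symm
  have key : Rev n p = ∑ d ∈ (Finset.range n ×ˢ Finset.range n).image s,
      monomial (F2 n d) (coeff d p) := by
    rw [Rev_eq]
    refine Finset.sum_subset hT fun d _ hd => ?_
    rw [MvPolynomial.notMem_support_iff.mp hd, map_zero]
  rw [key, Finset.sum_image (fun a _ b _ h => hinj h)]
  rw [mvRev, ← Finset.sum_product']
  refine Finset.sum_congr rfl fun ij hij => ?_
  rw [Finset.mem_product, Finset.mem_range, Finset.mem_range] at hij
  congr 1
  rw [F2, hs0, hs1, Polynomial.revAt_le (le_of_lt hij.1), Polynomial.revAt_le (le_of_lt hij.2)]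

lemma euler_sub (i : Fin 2) (p q : MvPolynomial (Fin 2) ℂ) :
    euler i (p - q) = euler i p - euler i q := by
  simp [euler, map_sub, mul_sub]

lemma euler_nsmul (i : Fin 2) (k : ℕ) (p : MvPolynomial (Fin 2) ℂ) :
    euler i (k • p) = k • euler i p := by
  rw [euler, map_nsmul, mul_smul_comm, ← euler]

lemma euler_euler (w : MvPolynomial (Fin 2) ℂ) :
    euler 0 (euler 1 w) = X 0 * X 1 * pderiv 0 (pderiv 1 w) := by
  rw [euler, euler, pderiv_mul, pderiv_X_of_ne (by decide : (1 : Fin 2) ≠ 0)]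
  ring

/-- Let `σ ∈ P_m[x,y]` have total degree `2m−2`. If `u ∈ P_{m+2}[x,y]`
solves the PDE for the data `σ`, then `ũ(x,y) = (xy)^{m+2}·u(1/x,1/y)` solves the PDE
with data `σ̃(x,y) = (xy)^m·σ(1/x,1/y)`. -/
theorem stmt17 (m : ℕ) (hm : 1 ≤ m)
    (σ u : MvPolynomial (Fin 2) ℂ)
    (hσx : σ.degreeOf 0 ≤ m - 1) (hσy : σ.degreeOf 1 ≤ m - 1)
    (hσd : σ.totalDegree = 2 * m - 2)
    (hux : u.degreeOf 0 ≤ m + 1) (huy : u.degreeOf 1 ≤ m + 1)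
    (hode : SolvesPDE σ u) :
    SolvesPDE (mvRev m σ) (mvRev (m + 2) u) := by
  classical
  set n := m + 2 with hn
  have hun : ∀ d ∈ u.support, d 0 < n ∧ d 1 < n := fun d hd =>
    ⟨lt_of_le_of_lt (degreeOf_le_iff.mp hux d hd) (by omega),
     lt_of_le_of_lt (degreeOf_le_iff.mp huy d hd) (by omega)⟩
  have hsm : ∀ d ∈ σ.support, d 0 < m ∧ d 1 < m := fun d hd =>
    ⟨lt_of_le_of_lt (degreeOf_le_iff.mp hσx d hd) (by omega),
     lt_of_le_of_lt (degreeOf_le_iff.mp hσy d hd) (by omega)⟩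
  have hu' : ∀ d ∈ u.support, d 0 ≤ n ∧ d 1 ≤ n := fun d hd =>
    ⟨le_of_lt (hun d hd).1, le_of_lt (hun d hd).2⟩
  have hs' : ∀ d ∈ σ.support, d 0 ≤ m ∧ d 1 ≤ m := fun d hd =>
    ⟨le_of_lt (hsm d hd).1, le_of_lt (hsm d hd).2⟩
  unfold SolvesPDE at hode ⊢
  rw [mvRev_eq m σ hsm, mvRev_eq n u hun]
  set A := Rev n u with hA
  set B := Rev n (euler 0 u) with hB
  set C := Rev n (euler 1 u) with hC
  set D := Rev n (euler 0 (euler 1 u)) with hD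
  have be1 : ∀ d ∈ (euler 1 u).support, d 0 ≤ n ∧ d 1 ≤ n :=
    fun d hd => hu' d (euler_support_subset 1 u hd)
  have be0 : ∀ d ∈ (euler 0 u).support, d 0 ≤ n ∧ d 1 ≤ n :=
    fun d hd => hu' d (euler_support_subset 0 u hd)
  have be01 : ∀ d ∈ (euler 0 (euler 1 u)).support, d 0 ≤ n ∧ d 1 ≤ n :=
    fun d hd => be1 d (euler_support_subset 0 _ hd)
  have h1 : euler 1 A = n • A - C := euler_rev 1 n u (fun d hd => (hu' d hd).2)
  have h0 : euler 0 A = n • A - B := euler_rev 0 n u (fun d hd => (hu' d hd).1)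
  have h2 : euler 0 C = n • C - D := euler_rev 0 n (euler 1 u) (fun d hd => (be1 d hd).1)
  have h3 : euler 0 (euler 1 A) = n • (n • A - B) - (n • C - D) := by
    rw [h1, euler_sub, euler_nsmul, h0, h2]
  have key : u * euler 0 (euler 1 u) - euler 0 u * euler 1 u = X 0 * X 1 * (σ * u) := by
    rw [euler_euler, euler, euler]
    linear_combination (X 0 * X 1 : MvPolynomial (Fin 2) ℂ) * hode
  have hADm : A * D = Rev (n + n) (u * euler 0 (euler 1 u)) := Rev_mul n n u _ hu' be01
  have hBCm : B * C = Rev (n + n) (euler 0 u * euler 1 u) := Rev_mul n n _ _ be0 be1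
  have hprod : ∀ d ∈ (σ * u).support, d 0 ≤ m + n ∧ d 1 ≤ m + n := by
    intro d hd
    have hmem := support_mul σ u hd
    rw [Finset.mem_add] at hmem
    obtain ⟨a, ha, b, hb, hab⟩ := hmem
    subst hab
    have h1 := hs' a ha
    have h2 := hu' b hb
    constructor <;> · rw [Finsupp.add_apply]; omega
  have hX : (X 0 * X 1 : MvPolynomial (Fin 2) ℂ)
      = monomial (Finsupp.single 0 1 + Finsupp.single 1 1) 1 := by
    rw [X, X, monomial_mul, one_mul]
  have hXb : ∀ d ∈ ((X 0 * X 1 : MvPolynomial (Fin 2) ℂ)).support, d 0 ≤ 2 ∧ d 1 ≤ 2 := by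
    rw [hX]
    intro d hd
    rw [support_monomial, if_neg one_ne_zero, Finset.mem_singleton] at hd
    subst hd
    constructor <;> simp [Finsupp.single_apply]
  have hRX : Rev 2 (X 0 * X 1 : MvPolynomial (Fin 2) ℂ) = X 0 * X 1 := by
    have hF : F2 2 (Finsupp.single 0 1 + Finsupp.single 1 1)
        = Finsupp.single (0 : Fin 2) 1 + Finsupp.single 1 1 :=
      Finsupp.ext fun j => by
        fin_cases j <;>
          simp [F2, Finsupp.single_apply, Polynomial.revAt_le (by norm_num : (1:ℕ) ≤ 2)]
    rw [hX, Rev_monomial, hF]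
  have key2 : A * D - B * C = X 0 * X 1 * (Rev m σ * A) := by
    rw [hADm, hBCm, ← map_sub, key]
    have hnn : n + n = 2 + (m + n) := by omega
    rw [hnn, ← Rev_mul 2 (m + n) (X 0 * X 1) (σ * u) hXb hprod,
      ← Rev_mul m n σ u hs' hu', hRX, hA]
  have hgoal : X 0 * X 1 * (A * pderiv 0 (pderiv 1 A) - pderiv 0 A * pderiv 1 A)
      = X 0 * X 1 * (Rev m σ * A) := by
    have lhs_eq : X 0 * X 1 * (A * pderiv 0 (pderiv 1 A) - pderiv 0 A * pderiv 1 A)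
        = A * euler 0 (euler 1 A) - euler 0 A * euler 1 A := by
      rw [euler_euler A, euler, euler]
      ring
    rw [lhs_eq, h3, h0, h1]
    simp only [nsmul_eq_mul]
    linear_combination key2
  exact mul_left_cancel₀ (mul_ne_zero (X_ne_zero _) (X_ne_zero _)) hgoal
end
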